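/- arXiv:1411.2833 — 5 statements merged into one kernel-verified Lean document; each statement's English description precedes it below -/
import Mathlib

section
/- Given C¹ functions g₁, g₂, g₃, g₄ on {(x,y) ∈ ℝ² : x ≤ y} and C¹ functions h⁻, h⁺ on ℝ², define ψ : Ω₁ → ℂ⁴ by ψ₁ = g₁(z₁−t₁, z₂−t₂), ψ₄ = g₄(z₁+t₁, z₂+t₂), ψ₂ = g₂(z₁−t₁, z₂+t₂) if z₁−t₁ < z₂+t₂ and ψ₂ = h⁻((−z₁+z₂+t₁+t₂)/2, (z₁+z₂−t₁+t₂)/2) otherwise, ψ₃ = g₃(z₁+t₁, z₂−t₂) if z₁+t₁ < z₂−t₂ and ψ₃ = h⁺((z₁−z₂+t₁+t₂)/2, (z₁+z₂+t₁−t₂)/2) otherwise. Then at every point of Ω₁ where ψ is differentiable, ψ satisfies the two-time massless Dirac system i∂_{t₁}ψ = −i(σ₃⊗1)∂_{z₁}ψ, i∂_{t₂}ψ = −i(1⊗σ₃)∂_{z₂}ψ, and ψ attains the initial values ψᵢ(0,z₁,0,z₂) = gᵢ(z₁,z₂) for z₁ < z₂. -/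
/-- Space-like configurations `(t₁, z₁, t₂, z₂)` with `z₁ < z₂`. -/
def Omega1 : Set (ℝ × ℝ × ℝ × ℝ) :=
  {p | (p.1 - p.2.2.1) ^ 2 - (p.2.1 - p.2.2.2) ^ 2 < 0 ∧ p.2.1 < p.2.2.2}

/-- If `ψ` is constant along the line through `p` in direction `v` and differentiable at `p`,
then the directional derivative in direction `v` vanishes. -/
lemma fderiv_dir_eq_zero {ψ : ℝ × ℝ × ℝ × ℝ → ℂ} {p v : ℝ × ℝ × ℝ × ℝ}
    (hd : DifferentiableAt ℝ ψ p) (hc : ∀ s : ℝ, ψ (p + s • v) = ψ p) :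
    fderiv ℝ ψ p v = 0 := by
  have hL : HasDerivAt (fun s : ℝ => p + s • v) v 0 := by
    simpa using ((hasDerivAt_id (0 : ℝ)).smul_const v).const_add p
  have h0 : (fun s : ℝ => p + s • v) 0 = p := by simp
  have hd' : HasFDerivAt ψ (fderiv ℝ ψ p) (p + (0 : ℝ) • v) := by
    simpa using hd.hasFDerivAt
  have hcomp : HasDerivAt (fun s : ℝ => ψ (p + s • v)) (fderiv ℝ ψ p v) 0 :=
    hd'.comp_hasDerivAt 0 hL
  have hconst : HasDerivAt (fun s : ℝ => ψ (p + s • v)) 0 0 := by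
    have : (fun s : ℝ => ψ (p + s • v)) = fun _ => ψ p := funext hc
    rw [this]; exact hasDerivAt_const 0 (ψ p)
  exact hcomp.unique hconst

/-- The explicitly constructed `ψ` attains the initial data and, at every point of `Ω₁` where
its components are differentiable, satisfies the (diagonalized) two-time massless Dirac system:
`(∂_{t₁} + ∂_{z₁})ψ₁ = (∂_{t₂} + ∂_{z₂})ψ₁ = 0`, `(∂_{t₁} + ∂_{z₁})ψ₂ = (∂_{t₂} - ∂_{z₂})ψ₂ = 0`,
`(∂_{t₁} - ∂_{z₁})ψ₃ = (∂_{t₂} + ∂_{z₂})ψ₃ = 0`, `(∂_{t₁} - ∂_{z₁})ψ₄ = (∂_{t₂} - ∂_{z₂})ψ₄ = 0`,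
which is the componentwise form of `i∂_{t₁}ψ = -i(σ₃⊗1)∂_{z₁}ψ`, `i∂_{t₂}ψ = -i(1⊗σ₃)∂_{z₂}ψ`. -/
theorem stmt_6
    (g1 g2 g3 g4 : ℝ × ℝ → ℂ) (hminus hplus : ℝ × ℝ → ℂ)
    (hg1 : ContDiffOn ℝ 1 g1 {q : ℝ × ℝ | q.1 ≤ q.2})
    (hg2 : ContDiffOn ℝ 1 g2 {q : ℝ × ℝ | q.1 ≤ q.2})
    (hg3 : ContDiffOn ℝ 1 g3 {q : ℝ × ℝ | q.1 ≤ q.2})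
    (hg4 : ContDiffOn ℝ 1 g4 {q : ℝ × ℝ | q.1 ≤ q.2})
    (hhm : ContDiff ℝ 1 hminus) (hhp : ContDiff ℝ 1 hplus)
    (ψ1 ψ2 ψ3 ψ4 : ℝ × ℝ × ℝ × ℝ → ℂ)
    (hψ1 : ∀ t1 z1 t2 z2 : ℝ, ψ1 (t1, z1, t2, z2) = g1 (z1 - t1, z2 - t2))
    (hψ2 : ∀ t1 z1 t2 z2 : ℝ, ψ2 (t1, z1, t2, z2) =
      if z1 - t1 < z2 + t2 then g2 (z1 - t1, z2 + t2)
      else hminus ((-z1 + z2 + t1 + t2) / 2, (z1 + z2 - t1 + t2) / 2))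
    (hψ3 : ∀ t1 z1 t2 z2 : ℝ, ψ3 (t1, z1, t2, z2) =
      if z1 + t1 < z2 - t2 then g3 (z1 + t1, z2 - t2)
      else hplus ((z1 - z2 + t1 + t2) / 2, (z1 + z2 + t1 - t2) / 2))
    (hψ4 : ∀ t1 z1 t2 z2 : ℝ, ψ4 (t1, z1, t2, z2) = g4 (z1 + t1, z2 + t2)) :
    (∀ z1 z2 : ℝ, z1 < z2 →
      ψ1 (0, z1, 0, z2) = g1 (z1, z2) ∧ ψ2 (0, z1, 0, z2) = g2 (z1, z2) ∧
      ψ3 (0, z1, 0, z2) = g3 (z1, z2) ∧ ψ4 (0, z1, 0, z2) = g4 (z1, z2)) ∧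
    (∀ p ∈ Omega1, DifferentiableAt ℝ ψ1 p →
      fderiv ℝ ψ1 p (1, 1, 0, 0) = 0 ∧ fderiv ℝ ψ1 p (0, 0, 1, 1) = 0) ∧
    (∀ p ∈ Omega1, DifferentiableAt ℝ ψ2 p →
      fderiv ℝ ψ2 p (1, 1, 0, 0) = 0 ∧ fderiv ℝ ψ2 p (0, 0, 1, -1) = 0) ∧
    (∀ p ∈ Omega1, DifferentiableAt ℝ ψ3 p →
      fderiv ℝ ψ3 p (1, -1, 0, 0) = 0 ∧ fderiv ℝ ψ3 p (0, 0, 1, 1) = 0) ∧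
    (∀ p ∈ Omega1, DifferentiableAt ℝ ψ4 p →
      fderiv ℝ ψ4 p (1, -1, 0, 0) = 0 ∧ fderiv ℝ ψ4 p (0, 0, 1, -1) = 0) := by
  refine ⟨?_, ?_, ?_, ?_, ?_⟩
  · intro z1 z2 h
    refine ⟨by simpa using hψ1 0 z1 0 z2, ?_, ?_, by simpa using hψ4 0 z1 0 z2⟩
    · rw [hψ2 0 z1 0 z2, if_pos (by simpa using h)]; norm_num
    · rw [hψ3 0 z1 0 z2, if_pos (by simpa using h)]; norm_num
  · rintro ⟨t1, z1, t2, z2⟩ _ hd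
    constructor <;> refine fderiv_dir_eq_zero hd fun s => ?_ <;>
      simp only [Prod.mk_add_mk, Prod.smul_mk, smul_eq_mul, hψ1] <;> ring_nf
  · rintro ⟨t1, z1, t2, z2⟩ _ hd
    constructor <;> refine fderiv_dir_eq_zero hd fun s => ?_ <;>
      simp only [Prod.mk_add_mk, Prod.smul_mk, smul_eq_mul, hψ2] <;> ring_nf
  · rintro ⟨t1, z1, t2, z2⟩ _ hd
    constructor <;> refine fderiv_dir_eq_zero hd fun s => ?_ <;>
      simp only [Prod.mk_add_mk, Prod.smul_mk, smul_eq_mul, hψ3] <;> ring_nf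
  · rintro ⟨t1, z1, t2, z2⟩ _ hd
    constructor <;> refine fderiv_dir_eq_zero hd fun s => ?_ <;>
      simp only [Prod.mk_add_mk, Prod.smul_mk, smul_eq_mul, hψ4] <;> ring_nf
end

section
/- The solution of the initial boundary value problem on Ω₁ is unique: if ψ and ψ' are both C¹ solutions of the two-time massless Dirac system on Ω₁ with the same initial data on {t₁ = t₂ = 0, z₁ < z₂} and the same boundary values ψ₃(t,z−0,t,z+0) for t ≥ 0 and ψ₂(t,z−0,t,z+0) for t < 0 on the coincidence set, then ψ = ψ' on Ω₁. -/
open Filter Topology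

/-- A `C¹` solution `(ψ₁,ψ₂,ψ₃,ψ₄)` of the (diagonalized) two-time massless Dirac system
on `Ω₁`. -/
structure DiracSolution (ψ1 ψ2 ψ3 ψ4 : ℝ × ℝ × ℝ × ℝ → ℂ) : Prop where
  smooth1 : ContDiffOn ℝ 1 ψ1 Omega1
  smooth2 : ContDiffOn ℝ 1 ψ2 Omega1
  smooth3 : ContDiffOn ℝ 1 ψ3 Omega1
  smooth4 : ContDiffOn ℝ 1 ψ4 Omega1
  pde1 : ∀ p ∈ Omega1, fderivWithin ℝ ψ1 Omega1 p (1, 1, 0, 0) = 0 ∧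
    fderivWithin ℝ ψ1 Omega1 p (0, 0, 1, 1) = 0
  pde2 : ∀ p ∈ Omega1, fderivWithin ℝ ψ2 Omega1 p (1, 1, 0, 0) = 0 ∧
    fderivWithin ℝ ψ2 Omega1 p (0, 0, 1, -1) = 0
  pde3 : ∀ p ∈ Omega1, fderivWithin ℝ ψ3 Omega1 p (1, -1, 0, 0) = 0 ∧
    fderivWithin ℝ ψ3 Omega1 p (0, 0, 1, 1) = 0
  pde4 : ∀ p ∈ Omega1, fderivWithin ℝ ψ4 Omega1 p (1, -1, 0, 0) = 0 ∧
    fderivWithin ℝ ψ4 Omega1 p (0, 0, 1, -1) = 0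

lemma isOpen_Omega1 : IsOpen Omega1 := by
  have h1 : IsOpen {p : ℝ × ℝ × ℝ × ℝ | (p.1 - p.2.2.1) ^ 2 - (p.2.1 - p.2.2.2) ^ 2 < 0} :=
    isOpen_lt (by fun_prop) continuous_const
  have h2 : IsOpen {p : ℝ × ℝ × ℝ × ℝ | p.2.1 < p.2.2.2} :=
    isOpen_lt (by fun_prop) (by fun_prop)
  exact h1.inter h2

lemma mem_Omega1_of {T1 Z1 T2 Z2 : ℝ} (h1 : T1 - T2 < Z2 - Z1) (h2 : T2 - T1 < Z2 - Z1) :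
    ((T1, Z1, T2, Z2) : ℝ × ℝ × ℝ × ℝ) ∈ Omega1 := by
  constructor
  · show (T1 - T2) ^ 2 - (Z1 - Z2) ^ 2 < 0
    nlinarith
  · show Z1 < Z2
    linarith

lemma const_on_seg {g : ℝ × ℝ × ℝ × ℝ → ℂ} (hg : ContDiffOn ℝ 1 g Omega1)
    (p w : ℝ × ℝ × ℝ × ℝ)
    (hw : ∀ q ∈ Omega1, fderiv ℝ g q w = 0)
    (hseg : ∀ s : ℝ, s ∈ Set.Icc (0:ℝ) 1 → p + s • w ∈ Omega1) :
    g (p + w) = g p := by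
  set f : ℝ → ℂ := fun s => g (p + s • w) with hf
  have hd : ∀ s ∈ Set.Icc (0:ℝ) 1, HasDerivAt f 0 s := by
    intro s hs
    have hq := hseg s hs
    have hdg : DifferentiableAt ℝ g (p + s • w) :=
      (hg.contDiffAt (isOpen_Omega1.mem_nhds hq)).differentiableAt one_ne_zero
    have hl : HasDerivAt (fun s : ℝ => p + s • w) w s := by
      simpa using ((hasDerivAt_id s).smul_const w).const_add p
    have := hdg.hasFDerivAt.comp_hasDerivAt s hl
    have h2 : HasDerivAt (g ∘ fun s : ℝ => p + s • w) 0 s := by simpa [hw _ hq] using this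
    exact h2
  have := constant_of_has_deriv_right_zero
    (f := f) (a := 0) (b := 1)
    (fun s hs => (hd s hs).continuousAt.continuousWithinAt)
    (fun s hs => (hd s (Set.mem_Icc_of_Ico hs)).hasDerivWithinAt)
    1 (by norm_num)
  simpa [hf] using this

lemma transport {g : ℝ × ℝ × ℝ × ℝ → ℂ} (hg : ContDiffOn ℝ 1 g Omega1)
    {v1 v2 p q : ℝ × ℝ × ℝ × ℝ} {a b : ℝ}
    (h1 : ∀ r ∈ Omega1, fderivWithin ℝ g Omega1 r v1 = 0)
    (h2 : ∀ r ∈ Omega1, fderivWithin ℝ g Omega1 r v2 = 0)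
    (hq : q = p + (a • v1 + b • v2))
    (hseg : ∀ s : ℝ, s ∈ Set.Icc (0:ℝ) 1 → p + s • (a • v1 + b • v2) ∈ Omega1) :
    g q = g p := by
  subst hq
  apply const_on_seg hg p _ _ hseg
  intro r hr
  have e1 : fderiv ℝ g r v1 = 0 := by
    rw [← fderivWithin_of_isOpen isOpen_Omega1 hr]; exact h1 r hr
  have e2 : fderiv ℝ g r v2 = 0 := by
    rw [← fderivWithin_of_isOpen isOpen_Omega1 hr]; exact h2 r hr
  rw [map_add, map_smul, map_smul, e1, e2]; simp

lemma tendsto_pe {g : ℝ × ℝ × ℝ × ℝ → ℂ} (hg : ContDiffOn ℝ 1 g Omega1)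
    {t1 z1 t2 z2 : ℝ} (hp : ((t1, z1, t2, z2) : ℝ × ℝ × ℝ × ℝ) ∈ Omega1) :
    Tendsto (fun ε : ℝ => g (t1, z1 - ε, t2, z2 + ε)) (𝓝[>] 0)
      (𝓝 (g (t1, z1, t2, z2))) := by
  have hc : ContinuousAt g (t1, z1, t2, z2) :=
    (hg.contDiffAt (isOpen_Omega1.mem_nhds hp)).continuousAt
  have h2 : Tendsto (fun ε : ℝ => ((t1, z1 - ε, t2, z2 + ε) : ℝ × ℝ × ℝ × ℝ)) (𝓝[>] 0)
      (𝓝 (t1, z1, t2, z2)) := by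
    apply Tendsto.mono_left _ nhdsWithin_le_nhds
    have hcont : Continuous fun ε : ℝ => ((t1, z1 - ε, t2, z2 + ε) : ℝ × ℝ × ℝ × ℝ) := by
      fun_prop
    simpa using hcont.tendsto 0
  exact hc.tendsto.comp h2

/-- Uniqueness for the initial boundary value problem on `Ω₁`: two `C¹` solutions of the
two-time massless Dirac system with the same initial data at `t₁ = t₂ = 0`, `z₁ < z₂` and the
same boundary values (as limits towards the coincidence set: `ψ₃(t, z-0, t, z+0)` for `t ≥ 0`
and `ψ₂(t, z-0, t, z+0)` for `t < 0`) agree on `Ω₁`. -/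
theorem stmt_7
    (ψ1 ψ2 ψ3 ψ4 φ1 φ2 φ3 φ4 : ℝ × ℝ × ℝ × ℝ → ℂ)
    (hψ : DiracSolution ψ1 ψ2 ψ3 ψ4) (hφ : DiracSolution φ1 φ2 φ3 φ4)
    (hinit : ∀ z1 z2 : ℝ, z1 < z2 →
      ψ1 (0, z1, 0, z2) = φ1 (0, z1, 0, z2) ∧ ψ2 (0, z1, 0, z2) = φ2 (0, z1, 0, z2) ∧
      ψ3 (0, z1, 0, z2) = φ3 (0, z1, 0, z2) ∧ ψ4 (0, z1, 0, z2) = φ4 (0, z1, 0, z2))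
    (b3 b2 : ℝ → ℝ → ℂ)
    (hbdry3ψ : ∀ t z : ℝ, 0 ≤ t →
      Tendsto (fun ε : ℝ => ψ3 (t, z - ε, t, z + ε)) (𝓝[>] 0) (𝓝 (b3 t z)))
    (hbdry3φ : ∀ t z : ℝ, 0 ≤ t →
      Tendsto (fun ε : ℝ => φ3 (t, z - ε, t, z + ε)) (𝓝[>] 0) (𝓝 (b3 t z)))
    (hbdry2ψ : ∀ t z : ℝ, t < 0 →
      Tendsto (fun ε : ℝ => ψ2 (t, z - ε, t, z + ε)) (𝓝[>] 0) (𝓝 (b2 t z)))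
    (hbdry2φ : ∀ t z : ℝ, t < 0 →
      Tendsto (fun ε : ℝ => φ2 (t, z - ε, t, z + ε)) (𝓝[>] 0) (𝓝 (b2 t z))) :
    ∀ p ∈ Omega1, ψ1 p = φ1 p ∧ ψ2 p = φ2 p ∧ ψ3 p = φ3 p ∧ ψ4 p = φ4 p := by
  rintro ⟨t1, z1, t2, z2⟩ hp
  have hz : z1 < z2 := hp.2
  have hsq : (t1 - t2) ^ 2 - (z1 - z2) ^ 2 < 0 := hp.1
  have hlt : t1 - t2 < z2 - z1 := by nlinarith [sq_nonneg (t1 - t2 + (z2 - z1))]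
  have hgt : t2 - t1 < z2 - z1 := by nlinarith [sq_nonneg (t1 - t2 - (z2 - z1))]
  refine ⟨?_, ?_, ?_, ?_⟩
  -- Component 1
  · have key : ∀ g : ℝ × ℝ × ℝ × ℝ → ℂ, ContDiffOn ℝ 1 g Omega1 →
        (∀ r ∈ Omega1, fderivWithin ℝ g Omega1 r (1, 1, 0, 0) = 0) →
        (∀ r ∈ Omega1, fderivWithin ℝ g Omega1 r (0, 0, 1, 1) = 0) →
        g (t1, z1, t2, z2) = g (0, z1 - t1, 0, z2 - t2) := by
      intro g hg h1 h2
      refine (transport hg h1 h2 (p := ((t1, z1, t2, z2) : ℝ × ℝ × ℝ × ℝ))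
        (a := -t1) (b := -t2) ?_ ?_).symm
      · simp only [Prod.smul_mk, Prod.mk_add_mk, smul_eq_mul, Prod.mk.injEq]
        refine ⟨?_, ?_, ?_, ?_⟩ <;> ring
      · intro s hs
        have hpt : ((t1, z1, t2, z2) : ℝ × ℝ × ℝ × ℝ) +
            s • ((-t1) • (1, 1, 0, 0) + (-t2) • (0, 0, 1, 1)) =
            (t1 - s*t1, z1 - s*t1, t2 - s*t2, z2 - s*t2) := by
          simp only [Prod.smul_mk, Prod.mk_add_mk, smul_eq_mul, Prod.mk.injEq]
          refine ⟨?_, ?_, ?_, ?_⟩ <;> ring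
        rw [hpt]
        refine mem_Omega1_of ?_ ?_ <;>
        nlinarith [mul_nonneg hs.1 (by linarith : (0:ℝ) ≤ z2 - z1 - (t1 - t2)),
          mul_nonneg hs.1 (by linarith : (0:ℝ) ≤ z2 - z1 + (t1 - t2)),
          mul_nonneg (by linarith [hs.2] : (0:ℝ) ≤ 1 - s) (by linarith : (0:ℝ) ≤ z2 - z1 - (t1 - t2)),
          mul_nonneg (by linarith [hs.2] : (0:ℝ) ≤ 1 - s) (by linarith : (0:ℝ) ≤ z2 - z1 + (t1 - t2))]
    rw [key ψ1 hψ.smooth1 (fun r hr => (hψ.pde1 r hr).1) (fun r hr => (hψ.pde1 r hr).2),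
      key φ1 hφ.smooth1 (fun r hr => (hφ.pde1 r hr).1) (fun r hr => (hφ.pde1 r hr).2)]
    exact (hinit _ _ (by linarith)).1
  -- Component 2
  · by_cases hA : -(z2 - z1) ≤ t1 + t2
    · -- reach the initial surface
      have key : ∀ g : ℝ × ℝ × ℝ × ℝ → ℂ, ContDiffOn ℝ 1 g Omega1 →
          (∀ r ∈ Omega1, fderivWithin ℝ g Omega1 r (1, 1, 0, 0) = 0) →
          (∀ r ∈ Omega1, fderivWithin ℝ g Omega1 r (0, 0, 1, -1) = 0) →
          ∀ ε : ℝ, 0 < ε →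
          g (t1, z1 - ε, t2, z2 + ε) = g (0, z1 - ε - t1, 0, z2 + ε + t2) := by
        intro g hg h1 h2 ε hε
        refine (transport hg h1 h2 (p := ((t1, z1 - ε, t2, z2 + ε) : ℝ × ℝ × ℝ × ℝ))
          (a := -t1) (b := -t2) ?_ ?_).symm
        · simp only [Prod.smul_mk, Prod.mk_add_mk, smul_eq_mul, Prod.mk.injEq]
          refine ⟨?_, ?_, ?_, ?_⟩ <;> ring
        · intro s hs
          have hpt : ((t1, z1 - ε, t2, z2 + ε) : ℝ × ℝ × ℝ × ℝ) +
              s • ((-t1) • (1, 1, 0, 0) + (-t2) • (0, 0, 1, -1)) =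
              (t1 - s*t1, z1 - ε - s*t1, t2 - s*t2, z2 + ε + s*t2) := by
            simp only [Prod.smul_mk, Prod.mk_add_mk, smul_eq_mul, Prod.mk.injEq]
            refine ⟨?_, ?_, ?_, ?_⟩ <;> ring
          rw [hpt]
          refine mem_Omega1_of ?_ ?_ <;>
          nlinarith [mul_nonneg hs.1 (by linarith : (0:ℝ) ≤ t1 + t2 + (z2 - z1)),
            mul_nonneg (by linarith [hs.2] : (0:ℝ) ≤ 1 - s) (by linarith : (0:ℝ) ≤ z2 - z1 - (t1 - t2)),
            mul_nonneg (by linarith [hs.2] : (0:ℝ) ≤ 1 - s) (by linarith : (0:ℝ) ≤ z2 - z1 + (t1 - t2))]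
      have lψ : Tendsto (fun ε : ℝ => ψ2 (0, z1 - ε - t1, 0, z2 + ε + t2)) (𝓝[>] 0)
          (𝓝 (ψ2 (t1, z1, t2, z2))) := by
        refine Tendsto.congr' ?_ (tendsto_pe hψ.smooth2 hp)
        filter_upwards [self_mem_nhdsWithin] with ε hε
        exact key ψ2 hψ.smooth2 (fun r hr => (hψ.pde2 r hr).1) (fun r hr => (hψ.pde2 r hr).2) ε hε
      have lφ : Tendsto (fun ε : ℝ => φ2 (0, z1 - ε - t1, 0, z2 + ε + t2)) (𝓝[>] 0)
          (𝓝 (φ2 (t1, z1, t2, z2))) := by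
        refine Tendsto.congr' ?_ (tendsto_pe hφ.smooth2 hp)
        filter_upwards [self_mem_nhdsWithin] with ε hε
        exact key φ2 hφ.smooth2 (fun r hr => (hφ.pde2 r hr).1) (fun r hr => (hφ.pde2 r hr).2) ε hε
      have heq : ∀ᶠ ε in 𝓝[>] (0:ℝ), ψ2 (0, z1 - ε - t1, 0, z2 + ε + t2)
          = φ2 (0, z1 - ε - t1, 0, z2 + ε + t2) := by
        filter_upwards [self_mem_nhdsWithin] with ε hε
        have : (0:ℝ) < ε := hε
        exact (hinit _ _ (by linarith)).2.1
      exact tendsto_nhds_unique lψ (Tendsto.congr' (heq.mono fun ε h => h.symm) lφ)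
    · -- reach the coincidence boundary, t* < 0
      push_neg at hA
      have key : ∀ g : ℝ × ℝ × ℝ × ℝ → ℂ, ContDiffOn ℝ 1 g Omega1 →
          (∀ r ∈ Omega1, fderivWithin ℝ g Omega1 r (1, 1, 0, 0) = 0) →
          (∀ r ∈ Omega1, fderivWithin ℝ g Omega1 r (0, 0, 1, -1) = 0) →
          ∀ ε : ℝ, 0 < ε →
          g (t1, z1 - ε, t2, z2 + ε) =
            g ((z2 - z1 + t1 + t2)/2, (z1 + z2 + t2 - t1)/2 - ε,
               (z2 - z1 + t1 + t2)/2, (z1 + z2 + t2 - t1)/2 + ε) := by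
        intro g hg h1 h2 ε hε
        refine (transport hg h1 h2 (p := ((t1, z1 - ε, t2, z2 + ε) : ℝ × ℝ × ℝ × ℝ))
          (a := (z2 - z1 + t1 + t2)/2 - t1) (b := (z2 - z1 + t1 + t2)/2 - t2) ?_ ?_).symm
        · simp only [Prod.smul_mk, Prod.mk_add_mk, smul_eq_mul, Prod.mk.injEq]
          refine ⟨?_, ?_, ?_, ?_⟩ <;> ring
        · intro s hs
          have hpt : ((t1, z1 - ε, t2, z2 + ε) : ℝ × ℝ × ℝ × ℝ) +
              s • (((z2 - z1 + t1 + t2)/2 - t1) • (1, 1, 0, 0) +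
                   ((z2 - z1 + t1 + t2)/2 - t2) • (0, 0, 1, -1)) =
              (t1 + s*((z2 - z1 + t1 + t2)/2 - t1), z1 - ε + s*((z2 - z1 + t1 + t2)/2 - t1),
               t2 + s*((z2 - z1 + t1 + t2)/2 - t2), z2 + ε - s*((z2 - z1 + t1 + t2)/2 - t2)) := by
            simp only [Prod.smul_mk, Prod.mk_add_mk, smul_eq_mul, Prod.mk.injEq]
            refine ⟨?_, ?_, ?_, ?_⟩ <;> ring
          rw [hpt]
          refine mem_Omega1_of ?_ ?_ <;>
          nlinarith [mul_nonneg (by linarith [hs.2] : (0:ℝ) ≤ 1 - s) (by linarith : (0:ℝ) ≤ z2 - z1 - (t1 - t2)),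
            mul_nonneg (by linarith [hs.2] : (0:ℝ) ≤ 1 - s) (by linarith : (0:ℝ) ≤ z2 - z1 + (t1 - t2))]
      have hts : (z2 - z1 + t1 + t2)/2 < 0 := by linarith
      have lψ : Tendsto (fun ε : ℝ => ψ2 ((z2 - z1 + t1 + t2)/2, (z1 + z2 + t2 - t1)/2 - ε,
          (z2 - z1 + t1 + t2)/2, (z1 + z2 + t2 - t1)/2 + ε)) (𝓝[>] 0)
          (𝓝 (ψ2 (t1, z1, t2, z2))) := by
        refine Tendsto.congr' ?_ (tendsto_pe hψ.smooth2 hp)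
        filter_upwards [self_mem_nhdsWithin] with ε hε
        exact key ψ2 hψ.smooth2 (fun r hr => (hψ.pde2 r hr).1) (fun r hr => (hψ.pde2 r hr).2) ε hε
      have lφ : Tendsto (fun ε : ℝ => φ2 ((z2 - z1 + t1 + t2)/2, (z1 + z2 + t2 - t1)/2 - ε,
          (z2 - z1 + t1 + t2)/2, (z1 + z2 + t2 - t1)/2 + ε)) (𝓝[>] 0)
          (𝓝 (φ2 (t1, z1, t2, z2))) := by
        refine Tendsto.congr' ?_ (tendsto_pe hφ.smooth2 hp)
        filter_upwards [self_mem_nhdsWithin] with ε hε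
        exact key φ2 hφ.smooth2 (fun r hr => (hφ.pde2 r hr).1) (fun r hr => (hφ.pde2 r hr).2) ε hε
      have e1 : ψ2 (t1, z1, t2, z2) = b2 ((z2 - z1 + t1 + t2)/2) ((z1 + z2 + t2 - t1)/2) :=
        tendsto_nhds_unique lψ (hbdry2ψ _ _ hts)
      have e2 : φ2 (t1, z1, t2, z2) = b2 ((z2 - z1 + t1 + t2)/2) ((z1 + z2 + t2 - t1)/2) :=
        tendsto_nhds_unique lφ (hbdry2φ _ _ hts)
      rw [e1, e2]
  -- Component 3
  · by_cases hA : z2 - z1 ≤ t1 + t2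
    · -- reach the coincidence boundary, t* ≥ 0
      have key : ∀ g : ℝ × ℝ × ℝ × ℝ → ℂ, ContDiffOn ℝ 1 g Omega1 →
          (∀ r ∈ Omega1, fderivWithin ℝ g Omega1 r (1, -1, 0, 0) = 0) →
          (∀ r ∈ Omega1, fderivWithin ℝ g Omega1 r (0, 0, 1, 1) = 0) →
          ∀ ε : ℝ, 0 < ε →
          g (t1, z1 - ε, t2, z2 + ε) =
            g ((t1 + t2 - (z2 - z1))/2, (z1 + z2 + t1 - t2)/2 - ε,
               (t1 + t2 - (z2 - z1))/2, (z1 + z2 + t1 - t2)/2 + ε) := by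
        intro g hg h1 h2 ε hε
        refine (transport hg h1 h2 (p := ((t1, z1 - ε, t2, z2 + ε) : ℝ × ℝ × ℝ × ℝ))
          (a := (t1 + t2 - (z2 - z1))/2 - t1) (b := (t1 + t2 - (z2 - z1))/2 - t2) ?_ ?_).symm
        · simp only [Prod.smul_mk, Prod.mk_add_mk, smul_eq_mul, Prod.mk.injEq]
          refine ⟨?_, ?_, ?_, ?_⟩ <;> ring
        · intro s hs
          have hpt : ((t1, z1 - ε, t2, z2 + ε) : ℝ × ℝ × ℝ × ℝ) +
              s • (((t1 + t2 - (z2 - z1))/2 - t1) • (1, -1, 0, 0) +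
                   ((t1 + t2 - (z2 - z1))/2 - t2) • (0, 0, 1, 1)) =
              (t1 + s*((t1 + t2 - (z2 - z1))/2 - t1), z1 - ε - s*((t1 + t2 - (z2 - z1))/2 - t1),
               t2 + s*((t1 + t2 - (z2 - z1))/2 - t2), z2 + ε + s*((t1 + t2 - (z2 - z1))/2 - t2)) := by
            simp only [Prod.smul_mk, Prod.mk_add_mk, smul_eq_mul, Prod.mk.injEq]
            refine ⟨?_, ?_, ?_, ?_⟩ <;> ring
          rw [hpt]
          refine mem_Omega1_of ?_ ?_ <;>
          nlinarith [mul_nonneg (by linarith [hs.2] : (0:ℝ) ≤ 1 - s) (by linarith : (0:ℝ) ≤ z2 - z1 - (t1 - t2)),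
            mul_nonneg (by linarith [hs.2] : (0:ℝ) ≤ 1 - s) (by linarith : (0:ℝ) ≤ z2 - z1 + (t1 - t2))]
      have hts : (0:ℝ) ≤ (t1 + t2 - (z2 - z1))/2 := by linarith
      have lψ : Tendsto (fun ε : ℝ => ψ3 ((t1 + t2 - (z2 - z1))/2, (z1 + z2 + t1 - t2)/2 - ε,
          (t1 + t2 - (z2 - z1))/2, (z1 + z2 + t1 - t2)/2 + ε)) (𝓝[>] 0)
          (𝓝 (ψ3 (t1, z1, t2, z2))) := by
        refine Tendsto.congr' ?_ (tendsto_pe hψ.smooth3 hp)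
        filter_upwards [self_mem_nhdsWithin] with ε hε
        exact key ψ3 hψ.smooth3 (fun r hr => (hψ.pde3 r hr).1) (fun r hr => (hψ.pde3 r hr).2) ε hε
      have lφ : Tendsto (fun ε : ℝ => φ3 ((t1 + t2 - (z2 - z1))/2, (z1 + z2 + t1 - t2)/2 - ε,
          (t1 + t2 - (z2 - z1))/2, (z1 + z2 + t1 - t2)/2 + ε)) (𝓝[>] 0)
          (𝓝 (φ3 (t1, z1, t2, z2))) := by
        refine Tendsto.congr' ?_ (tendsto_pe hφ.smooth3 hp)
        filter_upwards [self_mem_nhdsWithin] with ε hε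
        exact key φ3 hφ.smooth3 (fun r hr => (hφ.pde3 r hr).1) (fun r hr => (hφ.pde3 r hr).2) ε hε
      have e1 : ψ3 (t1, z1, t2, z2) = b3 ((t1 + t2 - (z2 - z1))/2) ((z1 + z2 + t1 - t2)/2) :=
        tendsto_nhds_unique lψ (hbdry3ψ _ _ hts)
      have e2 : φ3 (t1, z1, t2, z2) = b3 ((t1 + t2 - (z2 - z1))/2) ((z1 + z2 + t1 - t2)/2) :=
        tendsto_nhds_unique lφ (hbdry3φ _ _ hts)
      rw [e1, e2]
    · -- reach the initial surface
      push_neg at hA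
      have key : ∀ g : ℝ × ℝ × ℝ × ℝ → ℂ, ContDiffOn ℝ 1 g Omega1 →
          (∀ r ∈ Omega1, fderivWithin ℝ g Omega1 r (1, -1, 0, 0) = 0) →
          (∀ r ∈ Omega1, fderivWithin ℝ g Omega1 r (0, 0, 1, 1) = 0) →
          ∀ ε : ℝ, 0 < ε →
          g (t1, z1 - ε, t2, z2 + ε) = g (0, z1 - ε + t1, 0, z2 + ε - t2) := by
        intro g hg h1 h2 ε hε
        refine (transport hg h1 h2 (p := ((t1, z1 - ε, t2, z2 + ε) : ℝ × ℝ × ℝ × ℝ))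
          (a := -t1) (b := -t2) ?_ ?_).symm
        · simp only [Prod.smul_mk, Prod.mk_add_mk, smul_eq_mul, Prod.mk.injEq]
          refine ⟨?_, ?_, ?_, ?_⟩ <;> ring
        · intro s hs
          have hpt : ((t1, z1 - ε, t2, z2 + ε) : ℝ × ℝ × ℝ × ℝ) +
              s • ((-t1) • (1, -1, 0, 0) + (-t2) • (0, 0, 1, 1)) =
              (t1 - s*t1, z1 - ε + s*t1, t2 - s*t2, z2 + ε - s*t2) := by
            simp only [Prod.smul_mk, Prod.mk_add_mk, smul_eq_mul, Prod.mk.injEq]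
            refine ⟨?_, ?_, ?_, ?_⟩ <;> ring
          rw [hpt]
          refine mem_Omega1_of ?_ ?_ <;>
          nlinarith [mul_nonneg hs.1 (by linarith : (0:ℝ) ≤ z2 - z1 - (t1 + t2)),
            mul_nonneg (by linarith [hs.2] : (0:ℝ) ≤ 1 - s) (by linarith : (0:ℝ) ≤ z2 - z1 - (t1 - t2)),
            mul_nonneg (by linarith [hs.2] : (0:ℝ) ≤ 1 - s) (by linarith : (0:ℝ) ≤ z2 - z1 + (t1 - t2))]
      have lψ : Tendsto (fun ε : ℝ => ψ3 (0, z1 - ε + t1, 0, z2 + ε - t2)) (𝓝[>] 0)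
          (𝓝 (ψ3 (t1, z1, t2, z2))) := by
        refine Tendsto.congr' ?_ (tendsto_pe hψ.smooth3 hp)
        filter_upwards [self_mem_nhdsWithin] with ε hε
        exact key ψ3 hψ.smooth3 (fun r hr => (hψ.pde3 r hr).1) (fun r hr => (hψ.pde3 r hr).2) ε hε
      have lφ : Tendsto (fun ε : ℝ => φ3 (0, z1 - ε + t1, 0, z2 + ε - t2)) (𝓝[>] 0)
          (𝓝 (φ3 (t1, z1, t2, z2))) := by
        refine Tendsto.congr' ?_ (tendsto_pe hφ.smooth3 hp)
        filter_upwards [self_mem_nhdsWithin] with ε hε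
        exact key φ3 hφ.smooth3 (fun r hr => (hφ.pde3 r hr).1) (fun r hr => (hφ.pde3 r hr).2) ε hε
      have heq : ∀ᶠ ε in 𝓝[>] (0:ℝ), ψ3 (0, z1 - ε + t1, 0, z2 + ε - t2)
          = φ3 (0, z1 - ε + t1, 0, z2 + ε - t2) := by
        filter_upwards [self_mem_nhdsWithin] with ε hε
        have : (0:ℝ) < ε := hε
        exact (hinit _ _ (by linarith)).2.2.1
      exact tendsto_nhds_unique lψ (Tendsto.congr' (heq.mono fun ε h => h.symm) lφ)
  -- Component 4
  · have key : ∀ g : ℝ × ℝ × ℝ × ℝ → ℂ, ContDiffOn ℝ 1 g Omega1 →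
        (∀ r ∈ Omega1, fderivWithin ℝ g Omega1 r (1, -1, 0, 0) = 0) →
        (∀ r ∈ Omega1, fderivWithin ℝ g Omega1 r (0, 0, 1, -1) = 0) →
        g (t1, z1, t2, z2) = g (0, z1 + t1, 0, z2 + t2) := by
      intro g hg h1 h2
      refine (transport hg h1 h2 (p := ((t1, z1, t2, z2) : ℝ × ℝ × ℝ × ℝ))
        (a := -t1) (b := -t2) ?_ ?_).symm
      · simp only [Prod.smul_mk, Prod.mk_add_mk, smul_eq_mul, Prod.mk.injEq]
        refine ⟨?_, ?_, ?_, ?_⟩ <;> ring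
      · intro s hs
        have hpt : ((t1, z1, t2, z2) : ℝ × ℝ × ℝ × ℝ) +
            s • ((-t1) • (1, -1, 0, 0) + (-t2) • (0, 0, 1, -1)) =
            (t1 - s*t1, z1 + s*t1, t2 - s*t2, z2 + s*t2) := by
          simp only [Prod.smul_mk, Prod.mk_add_mk, smul_eq_mul, Prod.mk.injEq]
          refine ⟨?_, ?_, ?_, ?_⟩ <;> ring
        rw [hpt]
        refine mem_Omega1_of ?_ ?_ <;>
        nlinarith [mul_nonneg hs.1 (by linarith : (0:ℝ) ≤ z2 - z1 - (t1 - t2)),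
          mul_nonneg hs.1 (by linarith : (0:ℝ) ≤ z2 - z1 + (t1 - t2)),
          mul_nonneg (by linarith [hs.2] : (0:ℝ) ≤ 1 - s) (by linarith : (0:ℝ) ≤ z2 - z1 - (t1 - t2)),
          mul_nonneg (by linarith [hs.2] : (0:ℝ) ≤ 1 - s) (by linarith : (0:ℝ) ≤ z2 - z1 + (t1 - t2))]
    rw [key ψ4 hψ.smooth4 (fun r hr => (hψ.pde4 r hr).1) (fun r hr => (hψ.pde4 r hr).2),
      key φ4 hφ.smooth4 (fun r hr => (hφ.pde4 r hr).1) (fun r hr => (hφ.pde4 r hr).2)]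
    exact (hinit _ _ (by linarith)).2.2.2
end

section
/- Let ψ : Ω → ℂ⁴ be a C¹ solution of the two-time massless Dirac system and define the tensor current j^{μν} = ψ† (γ₁⁰γ₂⁰ γ₁^μ γ₂^ν) ψ for μ,ν ∈ {0,1}, where γ⁰ = σ₁, γ¹ = σ₁σ₃, γ₁^μ = γ^μ⊗1, γ₂^ν = 1⊗γ^ν. Then the continuity equations ∂_{t₁} j^{0ν} + ∂_{z₁} j^{1ν} = 0 and ∂_{t₂} j^{μ0} + ∂_{z₂} j^{μ1} = 0 hold on Ω. -/
open Matrix Kronecker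

noncomputable section

/-- Pauli matrix `σ₁`. -/
def pauli1 : Matrix (Fin 2) (Fin 2) ℂ := !![0, 1; 1, 0]

/-- Pauli matrix `σ₃`. -/
def pauli3 : Matrix (Fin 2) (Fin 2) ℂ := !![1, 0; 0, -1]

/-- The 1+1 dimensional gamma matrices `γ⁰ = σ₁`, `γ¹ = σ₁σ₃`. -/
def gam : Fin 2 → Matrix (Fin 2) (Fin 2) ℂ := fun μ => if μ = 0 then pauli1 else pauli1 * pauli3

/-- `γ₁^μ = γ^μ ⊗ 1`. -/
def Gam1 (μ : Fin 2) : Matrix (Fin 2 × Fin 2) (Fin 2 × Fin 2) ℂ := gam μ ⊗ₖ (1 : Matrix (Fin 2) (Fin 2) ℂ)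

/-- `γ₂^ν = 1 ⊗ γ^ν`. -/
def Gam2 (ν : Fin 2) : Matrix (Fin 2 × Fin 2) (Fin 2 × Fin 2) ℂ := (1 : Matrix (Fin 2) (Fin 2) ℂ) ⊗ₖ gam ν

/-- The tensor current `j^{μν} = ψ† γ₁⁰γ₂⁰ γ₁^μ γ₂^ν ψ`. -/
def curr (ψ : Fin 2 × Fin 2 → ℂ) (μ ν : Fin 2) : ℂ :=
  star ψ ⬝ᵥ ((Gam1 0 * Gam2 0 * Gam1 μ * Gam2 ν) *ᵥ ψ)

lemma fderiv_quad (ψ : ℝ × ℝ × ℝ × ℝ → (Fin 2 × Fin 2 → ℂ)) (p : ℝ × ℝ × ℝ × ℝ)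
    (D : (ℝ × ℝ × ℝ × ℝ) →L[ℝ] (Fin 2 × Fin 2 → ℂ)) (hψ : HasFDerivAt ψ D p)
    (M : Matrix (Fin 2 × Fin 2) (Fin 2 × Fin 2) ℂ) (v : ℝ × ℝ × ℝ × ℝ) :
    fderiv ℝ (fun q => star (ψ q) ⬝ᵥ (M *ᵥ ψ q)) p v
      = star (D v) ⬝ᵥ (M *ᵥ ψ p) + star (ψ p) ⬝ᵥ (M *ᵥ (D v)) := by
  have hfun : (fun q => star (ψ q) ⬝ᵥ (M *ᵥ ψ q))
      = fun q => ∑ i, ∑ j, (starRingEnd ℂ) (ψ q i) * (M i j * ψ q j) := by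
    funext q
    simp [dotProduct, Matrix.mulVec, Finset.mul_sum, Pi.star_apply, Complex.star_def]
  have hproj : ∀ i : Fin 2 × Fin 2, HasFDerivAt (fun q => ψ q i)
      ((ContinuousLinearMap.proj i).comp D) p :=
    fun i => (ContinuousLinearMap.proj (R := ℝ) (φ := fun _ : Fin 2 × Fin 2 => ℂ) i).hasFDerivAt.comp p hψ
  have hconj : ∀ i : Fin 2 × Fin 2, HasFDerivAt (fun q => (starRingEnd ℂ) (ψ q i))
      ((Complex.conjCLE.toContinuousLinearMap).comp ((ContinuousLinearMap.proj i).comp D)) p := by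
    intro i
    exact (Complex.conjCLE.toContinuousLinearMap.hasFDerivAt).comp p (hproj i)
  have H : HasFDerivAt (fun q => star (ψ q) ⬝ᵥ (M *ᵥ ψ q))
      (∑ i, ∑ j, ((starRingEnd ℂ) (ψ p i) • ((M i j) • ((ContinuousLinearMap.proj j).comp D)) +
        (M i j * ψ p j) • ((Complex.conjCLE.toContinuousLinearMap).comp
          ((ContinuousLinearMap.proj i).comp D)))) p := by
    rw [hfun]
    apply HasFDerivAt.fun_sum
    intro i _
    apply HasFDerivAt.fun_sum
    intro j _
    exact (hconj i).mul ((hproj j).const_mul (M i j))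
  rw [H.fderiv]
  simp [dotProduct, Matrix.mulVec, Finset.mul_sum, Pi.star_apply, Complex.star_def,
    Fintype.sum_prod_type, Fin.sum_univ_two]
  ring

/-- If `ψ : Ω → ℂ⁴` is a `C¹` solution of the two-time massless Dirac system
`i∂_{t₁}ψ = -i(σ₃⊗1)∂_{z₁}ψ`, `i∂_{t₂}ψ = -i(1⊗σ₃)∂_{z₂}ψ` on an open set `Ω` of
configurations `(t₁, z₁, t₂, z₂)`, then the tensor current satisfies the continuity
equations `∂_{t₁}j^{0ν} + ∂_{z₁}j^{1ν} = 0` and `∂_{t₂}j^{μ0} + ∂_{z₂}j^{μ1} = 0` on `Ω`. -/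
theorem stmt_8 (Ω : Set (ℝ × ℝ × ℝ × ℝ)) (hΩ : IsOpen Ω)
    (ψ : ℝ × ℝ × ℝ × ℝ → (Fin 2 × Fin 2 → ℂ)) (hC1 : ContDiffOn ℝ 1 ψ Ω)
    (hpde1 : ∀ p ∈ Ω, Complex.I • fderivWithin ℝ ψ Ω p (1, 0, 0, 0) =
      (-Complex.I) • ((pauli3 ⊗ₖ (1 : Matrix (Fin 2) (Fin 2) ℂ)) *ᵥ
        fderivWithin ℝ ψ Ω p (0, 1, 0, 0)))
    (hpde2 : ∀ p ∈ Ω, Complex.I • fderivWithin ℝ ψ Ω p (0, 0, 1, 0) =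
      (-Complex.I) • (((1 : Matrix (Fin 2) (Fin 2) ℂ) ⊗ₖ pauli3) *ᵥ
        fderivWithin ℝ ψ Ω p (0, 0, 0, 1))) :
    ∀ p ∈ Ω,
      (∀ ν : Fin 2,
        fderivWithin ℝ (fun q => curr (ψ q) 0 ν) Ω p (1, 0, 0, 0) +
          fderivWithin ℝ (fun q => curr (ψ q) 1 ν) Ω p (0, 1, 0, 0) = 0) ∧
      (∀ μ : Fin 2,
        fderivWithin ℝ (fun q => curr (ψ q) μ 0) Ω p (0, 0, 1, 0) +
          fderivWithin ℝ (fun q => curr (ψ q) μ 1) Ω p (0, 0, 0, 1) = 0) := by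
  intro p hp
  have hmem : Ω ∈ nhds p := hΩ.mem_nhds hp
  have hdiff : DifferentiableAt ℝ ψ p := (hC1.contDiffAt hmem).differentiableAt one_ne_zero
  have hD : HasFDerivAt ψ (fderiv ℝ ψ p) p := hdiff.hasFDerivAt
  set D := fderiv ℝ ψ p with hDdef
  have hW : fderivWithin ℝ ψ Ω p = D := fderivWithin_of_isOpen hΩ hp
  have h1 := hpde1 p hp
  have h2 := hpde2 p hp
  rw [hW] at h1 h2
  have hx1 : D (1, 0, 0, 0) = -((pauli3 ⊗ₖ (1 : Matrix (Fin 2) (Fin 2) ℂ)) *ᵥ D (0, 1, 0, 0)) := by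
    funext i
    have h := congrFun h1 i
    simp only [Pi.smul_apply, smul_eq_mul, Pi.neg_apply] at h ⊢
    exact mul_left_cancel₀ Complex.I_ne_zero (by rw [h]; ring)
  have hx2 : D (0, 0, 1, 0) = -(((1 : Matrix (Fin 2) (Fin 2) ℂ) ⊗ₖ pauli3) *ᵥ D (0, 0, 0, 1)) := by
    funext i
    have h := congrFun h2 i
    simp only [Pi.smul_apply, smul_eq_mul, Pi.neg_apply] at h ⊢
    exact mul_left_cancel₀ Complex.I_ne_zero (by rw [h]; ring)
  have key : ∀ (μ ν : Fin 2) (v : ℝ × ℝ × ℝ × ℝ),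
      fderivWithin ℝ (fun q => curr (ψ q) μ ν) Ω p v
        = star (D v) ⬝ᵥ ((Gam1 0 * Gam2 0 * Gam1 μ * Gam2 ν) *ᵥ ψ p) +
          star (ψ p) ⬝ᵥ ((Gam1 0 * Gam2 0 * Gam1 μ * Gam2 ν) *ᵥ (D v)) := by
    intro μ ν v
    rw [fderivWithin_of_isOpen hΩ hp]
    exact fderiv_quad ψ p D hD _ v
  have hM : ∀ μ ν : Fin 2, Gam1 0 * Gam2 0 * Gam1 μ * Gam2 ν
      = (pauli1 * gam μ) ⊗ₖ (pauli1 * gam ν) := by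
    intro μ ν
    have : gam 0 = pauli1 := by simp [gam]
    simp only [Gam1, Gam2, this, ← Matrix.mul_kronecker_mul, Matrix.one_mul, Matrix.mul_one]
  have hg0 : pauli1 * gam 0 = (1 : Matrix (Fin 2) (Fin 2) ℂ) := by
    ext i j
    fin_cases i <;> fin_cases j <;>
      simp [pauli1, gam, Matrix.mul_apply, Fin.sum_univ_two, Matrix.one_apply]
  have hg1 : pauli1 * gam 1 = pauli3 := by
    ext i j
    fin_cases i <;> fin_cases j <;>
      simp [pauli1, pauli3, gam, Matrix.mul_apply, Fin.sum_univ_two]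
  constructor
  · intro ν
    rw [key, key, hx1, hM, hM, hg0, hg1]
    set K := pauli1 * gam ν with hK
    simp only [Matrix.mulVec, dotProduct, Fintype.sum_prod_type, Fin.sum_univ_two,
      Matrix.kroneckerMap_apply, Matrix.one_apply, Pi.star_apply, Pi.neg_apply,
      Complex.star_def, map_neg, map_add, pauli3, pauli1, Matrix.cons_val', Matrix.cons_val_zero,
      Matrix.cons_val_one, Matrix.head_cons, Matrix.head_fin_const, Matrix.empty_val',
      Matrix.cons_val_fin_one, if_true, if_false]
    norm_num
    ring
  · intro μ
    rw [key, key, hx2, hM, hM, hg0, hg1]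
    set L := pauli1 * gam μ with hL
    simp only [Matrix.mulVec, dotProduct, Fintype.sum_prod_type, Fin.sum_univ_two,
      Matrix.kroneckerMap_apply, Matrix.one_apply, Pi.star_apply, Pi.neg_apply,
      Complex.star_def, map_neg, map_add, pauli3, pauli1, Matrix.cons_val', Matrix.cons_val_zero,
      Matrix.cons_val_one, Matrix.head_cons, Matrix.head_fin_const, Matrix.empty_val',
      Matrix.cons_val_fin_one, if_true, if_false]
    norm_num
    ring

end
end

section
/- Let φ̃, χ̃ : ℝ → ℂ with supp φ̃ ⊆ [a,b], supp χ̃ ⊆ [c,d], a < b < c < d, and define on Ω₁ the function ψ with ψ₁ ≡ ψ₄ ≡ 0, ψ₂(t₁,z₁,t₂,z₂) = φ̃(z₁−t₁)χ̃(z₂+t₂)·Θ(−z₁+t₁+z₂+t₂), and ψ₃(t₁,z₁,t₂,z₂) = e^{iθ₁((z₁−z₂+t₁+t₂)/2, (z₁+z₂+t₁−t₂)/2)} φ̃(z₂−t₂)χ̃(z₁+t₁)·Θ(z₁+t₁−z₂+t₂), where Θ is the Heaviside function and θ₁ : ℝ² → ℝ. Then ψ satisfies: (i) the initial conditions ψ₂(0,z₁,0,z₂)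 = φ̃(z₁)χ̃(z₂) and ψᵢ(0,z₁,0,z₂) = 0 for i = 1,3,4 on {z₁ < z₂}; (ii) the boundary condition ψ₂(t,z−0,t,z+0) = e^{−iθ₁(t,z)}ψ₃(t,z−0,t,z+0) for all t,z; and (iii) each component is constant along its corresponding characteristic (ψ₂ depends only on (z₁−t₁, z₂+t₂), ψ₃ only on (z₁+t₁, z₂−t₂)). -/
open Filter Topology

/-- The Heaviside function `Θ(x) = 1` for `x ≥ 0` and `0` for `x < 0`. -/
noncomputable def heaviside (x : ℝ) : ℝ := if 0 ≤ x then 1 else 0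

/-- The explicitly evolved initially well-localized product wave function: it attains the
product initial data, satisfies the probability-conserving boundary condition with phase
`θ₁` (as a limit towards the coincidence set), and each nonzero component is constant along
its multi-time characteristic. -/
theorem stmt_17 (a b c d : ℝ) (hab : a < b) (hbc : b < c) (hcd : c < d)
    (φ χ : ℝ → ℂ) (hφc : Continuous φ) (hχc : Continuous χ)
    (hφsupp : ∀ x : ℝ, x ∉ Set.Icc a b → φ x = 0)
    (hχsupp : ∀ x : ℝ, x ∉ Set.Icc c d → χ x = 0)
    (θ1 : ℝ → ℝ → ℝ) (hθ1 : Continuous fun q : ℝ × ℝ => θ1 q.1 q.2)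
    (ψ1 ψ2 ψ3 ψ4 : ℝ × ℝ × ℝ × ℝ → ℂ)
    (hψ1 : ∀ p, ψ1 p = 0) (hψ4 : ∀ p, ψ4 p = 0)
    (hψ2 : ∀ t1 z1 t2 z2 : ℝ, ψ2 (t1, z1, t2, z2) =
      φ (z1 - t1) * χ (z2 + t2) * (heaviside (-z1 + t1 + z2 + t2) : ℝ))
    (hψ3 : ∀ t1 z1 t2 z2 : ℝ, ψ3 (t1, z1, t2, z2) =
      Complex.exp ((θ1 ((z1 - z2 + t1 + t2) / 2) ((z1 + z2 + t1 - t2) / 2) : ℂ) *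
          Complex.I) *
        φ (z2 - t2) * χ (z1 + t1) * (heaviside (z1 + t1 - z2 + t2) : ℝ)) :
    -- (i) initial conditions on {z₁ < z₂}
    (∀ z1 z2 : ℝ, z1 < z2 →
      ψ2 (0, z1, 0, z2) = φ z1 * χ z2 ∧ ψ1 (0, z1, 0, z2) = 0 ∧
      ψ3 (0, z1, 0, z2) = 0 ∧ ψ4 (0, z1, 0, z2) = 0) ∧
    -- (ii) boundary condition ψ₂(t,z-0,t,z+0) = e^{-iθ₁(t,z)} ψ₃(t,z-0,t,z+0)
    (∀ t z : ℝ,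
      Tendsto (fun ε : ℝ => ψ2 (t, z - ε, t, z + ε) -
          Complex.exp (-(θ1 t z : ℂ) * Complex.I) * ψ3 (t, z - ε, t, z + ε))
        (𝓝[>] 0) (𝓝 0)) ∧
    -- (iii) ψ₂ depends only on (z₁-t₁, z₂+t₂) and ψ₃ only on (z₁+t₁, z₂-t₂)
    (∀ t1 z1 t2 z2 t1' z1' t2' z2' : ℝ, z1 - t1 = z1' - t1' → z2 + t2 = z2' + t2' →
      ψ2 (t1, z1, t2, z2) = ψ2 (t1', z1', t2', z2')) ∧
    (∀ t1 z1 t2 z2 t1' z1' t2' z2' : ℝ, z1 + t1 = z1' + t1' → z2 - t2 = z2' - t2' →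
      ψ3 (t1, z1, t2, z2) = ψ3 (t1', z1', t2', z2')) := by
  have hH1 : ∀ x : ℝ, 0 ≤ x → heaviside x = 1 := fun x hx => if_pos hx
  have hH0 : ∀ x : ℝ, x < 0 → heaviside x = 0 := fun x hx => if_neg (not_le.2 hx)
  -- key: the Heaviside factor is redundant on the support
  have key : ∀ u v : ℝ, φ u * χ v * (heaviside (v - u) : ℝ) = φ u * χ v := by
    intro u v
    by_cases hu : φ u = 0
    · simp [hu]
    by_cases hv : χ v = 0
    · simp [hv]
    have hub : u ∈ Set.Icc a b := by by_contra h; exact hu (hφsupp u h)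
    have hvc : v ∈ Set.Icc c d := by by_contra h; exact hv (hχsupp v h)
    have : (0:ℝ) ≤ v - u := by
      have := hub.2; have := hvc.1; linarith
    rw [hH1 _ this]; simp
  have hψ2' : ∀ t1 z1 t2 z2 : ℝ, ψ2 (t1, z1, t2, z2) = φ (z1 - t1) * χ (z2 + t2) := by
    intro t1 z1 t2 z2
    rw [hψ2]
    have harg : -z1 + t1 + z2 + t2 = (z2 + t2) - (z1 - t1) := by ring
    rw [harg, key]
  have hψ3' : ∀ t1 z1 t2 z2 : ℝ, ψ3 (t1, z1, t2, z2) =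
      Complex.exp ((θ1 ((z1 - z2 + t1 + t2) / 2) ((z1 + z2 + t1 - t2) / 2) : ℂ) *
          Complex.I) * (φ (z2 - t2) * χ (z1 + t1)) := by
    intro t1 z1 t2 z2
    rw [hψ3]
    have harg : z1 + t1 - z2 + t2 = (z1 + t1) - (z2 - t2) := by ring
    rw [harg, mul_assoc, mul_assoc]
    congr 1
    rw [← mul_assoc]
    exact key _ _
  refine ⟨?_, ?_, ?_, ?_⟩
  · intro z1 z2 h
    refine ⟨by rw [hψ2']; simp, hψ1 _, ?_, hψ4 _⟩
    rw [hψ3]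
    have : z1 + 0 - z2 + 0 < 0 := by linarith
    rw [hH0 _ this]; simp
  · intro t z
    have heq : (fun ε : ℝ => ψ2 (t, z - ε, t, z + ε) -
          Complex.exp (-(θ1 t z : ℂ) * Complex.I) * ψ3 (t, z - ε, t, z + ε)) =
        fun ε : ℝ => φ (z - ε - t) * χ (z + ε + t) -
          Complex.exp (-(θ1 t z : ℂ) * Complex.I) *
            (Complex.exp ((θ1 (t - ε) z : ℂ) * Complex.I) *
              (φ (z + ε - t) * χ (z - ε + t))) := by
      funext ε
      rw [hψ2', hψ3']
      have h1 : (z - ε - (z + ε) + t + t) / 2 = t - ε := by ring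
      have h2 : (z - ε + (z + ε) + t - t) / 2 = z := by ring
      rw [h1, h2]
    rw [heq]
    have hcont : Continuous (fun ε : ℝ => φ (z - ε - t) * χ (z + ε + t) -
          Complex.exp (-(θ1 t z : ℂ) * Complex.I) *
            (Complex.exp ((θ1 (t - ε) z : ℂ) * Complex.I) *
              (φ (z + ε - t) * χ (z - ε + t)))) := by
      apply Continuous.sub
      · exact (hφc.comp (by fun_prop)).mul (hχc.comp (by fun_prop))
      · apply Continuous.mul continuous_const
        apply Continuous.mul
        · apply Complex.continuous_exp.comp
          apply Continuous.mul _ continuous_const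
          exact Complex.continuous_ofReal.comp
            (hθ1.comp (by fun_prop : Continuous fun ε : ℝ => ((t - ε, z) : ℝ × ℝ)))
        · exact (hφc.comp (by fun_prop)).mul (hχc.comp (by fun_prop))
    have hval : (φ (z - 0 - t) * χ (z + 0 + t) -
          Complex.exp (-(θ1 t z : ℂ) * Complex.I) *
            (Complex.exp ((θ1 (t - 0) z : ℂ) * Complex.I) *
              (φ (z + 0 - t) * χ (z - 0 + t)))) = 0 := by
      simp only [sub_zero, add_zero]
      rw [← mul_assoc, ← Complex.exp_add]
      ring_nf
      rw [Complex.exp_zero]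
      ring
    have := hcont.tendsto 0
    rw [hval] at this
    exact this.mono_left nhdsWithin_le_nhds
  · intro t1 z1 t2 z2 t1' z1' t2' z2' h1 h2
    rw [hψ2', hψ2', h1, h2]
  · intro t1 z1 t2 z2 t1' z1' t2' z2' h1 h2
    rw [hψ3', hψ3']
    have e1 : (z1 - z2 + t1 + t2) / 2 = ((z1 + t1) - (z2 - t2)) / 2 := by ring
    have e2 : (z1 + z2 + t1 - t2) / 2 = ((z1 + t1) + (z2 - t2)) / 2 := by ring
    have e1' : (z1' - z2' + t1' + t2') / 2 = ((z1' + t1') - (z2' - t2')) / 2 := by ring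
    have e2' : (z1' + z2' + t1' - t2') / 2 = ((z1' + t1') + (z2' - t2')) / 2 := by ring
    have f1 : z2 - t2 = z2' - t2' := by linarith
    rw [e1, e2, e1', e2', h1, f1]
end

section
/- Let ψ : Ω₁ → ℂ⁴ be given by the explicit solution formula with compactly supported initial data: ψ₁ = g₁(z₁−t₁,z₂−t₂), ψ₄ = g₄(z₁+t₁,z₂+t₂), ψ₂ and ψ₃ defined case-wise from g₂, g₃, h₁⁻, h₁⁺ as in the explicit solution, where g₁,…,g₄ have compact support in {(x,y) : x ≤ y} and h₁^± have compact support in ℝ². Then for every T > 0 there exists R > 0 such that ψ(t₁,z₁,t₂,z₂) = 0 whenever |t₁| ≤ T, |t₂| ≤ T and |z₁| + |z₂| > R. -/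
lemma support_bound (g : ℝ × ℝ → ℂ) (hg : HasCompactSupport g) :
    ∃ M : ℝ, 0 < M ∧ ∀ x y : ℝ, M < |x| + |y| → g (x, y) = 0 := by
  have hb := hg.isBounded
  rw [isBounded_iff_forall_norm_le] at hb
  obtain ⟨C, hC⟩ := hb
  refine ⟨2 * |C| + 1, by positivity, fun x y hxy => ?_⟩
  by_contra hne
  have hmem : (x, y) ∈ tsupport g := subset_tsupport g hne
  have hn := hC _ hmem
  have hx : |x| ≤ ‖((x, y) : ℝ × ℝ)‖ := by
    simpa [Real.norm_eq_abs] using norm_fst_le ((x, y) : ℝ × ℝ)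
  have hy : |y| ≤ ‖((x, y) : ℝ × ℝ)‖ := by
    simpa [Real.norm_eq_abs] using norm_snd_le ((x, y) : ℝ × ℝ)
  have hCle : C ≤ |C| := le_abs_self C
  linarith

lemma low (u v : ℝ) : |u| - |v| ≤ |u + v| := by
  have h := abs_sub_abs_le_abs_sub u (-v)
  rw [abs_neg, sub_neg_eq_add] at h
  exact h

/-- Finite propagation speed for the explicit solution on `Ω₁` with compactly supported
data (initial data `g₁,…,g₄` supported in `{x ≤ y}`, boundary data `h₁⁻, h₁⁺`): for every
`T > 0` there is `R > 0` such that the solution vanishes at all points of `Ω₁` with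
`|t₁| ≤ T`, `|t₂| ≤ T` and `|z₁| + |z₂| > R`. -/
theorem stmt_19
    (g1 g2 g3 g4 : ℝ × ℝ → ℂ) (hminus hplus : ℝ × ℝ → ℂ)
    (hg1supp : HasCompactSupport g1) (hg2supp : HasCompactSupport g2)
    (hg3supp : HasCompactSupport g3) (hg4supp : HasCompactSupport g4)
    (hg1dom : ∀ q : ℝ × ℝ, q.2 < q.1 → g1 q = 0)
    (hg2dom : ∀ q : ℝ × ℝ, q.2 < q.1 → g2 q = 0)
    (hg3dom : ∀ q : ℝ × ℝ, q.2 < q.1 → g3 q = 0)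
    (hg4dom : ∀ q : ℝ × ℝ, q.2 < q.1 → g4 q = 0)
    (hhmsupp : HasCompactSupport hminus) (hhpsupp : HasCompactSupport hplus)
    (ψ1 ψ2 ψ3 ψ4 : ℝ × ℝ × ℝ × ℝ → ℂ)
    (hψ1 : ∀ t1 z1 t2 z2 : ℝ, ψ1 (t1, z1, t2, z2) = g1 (z1 - t1, z2 - t2))
    (hψ2 : ∀ t1 z1 t2 z2 : ℝ, ψ2 (t1, z1, t2, z2) =
      if z1 - t1 < z2 + t2 then g2 (z1 - t1, z2 + t2)
      else hminus ((-z1 + z2 + t1 + t2) / 2, (z1 + z2 - t1 + t2) / 2))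
    (hψ3 : ∀ t1 z1 t2 z2 : ℝ, ψ3 (t1, z1, t2, z2) =
      if z1 + t1 < z2 - t2 then g3 (z1 + t1, z2 - t2)
      else hplus ((z1 - z2 + t1 + t2) / 2, (z1 + z2 + t1 - t2) / 2))
    (hψ4 : ∀ t1 z1 t2 z2 : ℝ, ψ4 (t1, z1, t2, z2) = g4 (z1 + t1, z2 + t2)) :
    ∀ T : ℝ, 0 < T → ∃ R : ℝ, 0 < R ∧
      ∀ t1 z1 t2 z2 : ℝ, (t1, z1, t2, z2) ∈ Omega1 → |t1| ≤ T → |t2| ≤ T →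
        R < |z1| + |z2| →
        ψ1 (t1, z1, t2, z2) = 0 ∧ ψ2 (t1, z1, t2, z2) = 0 ∧
        ψ3 (t1, z1, t2, z2) = 0 ∧ ψ4 (t1, z1, t2, z2) = 0 := by
  intro T hT
  obtain ⟨M1, hM1pos, hM1⟩ := support_bound g1 hg1supp
  obtain ⟨M2, hM2pos, hM2⟩ := support_bound g2 hg2supp
  obtain ⟨M3, hM3pos, hM3⟩ := support_bound g3 hg3supp
  obtain ⟨M4, hM4pos, hM4⟩ := support_bound g4 hg4supp
  obtain ⟨M5, hM5pos, hM5⟩ := support_bound hminus hhmsupp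
  obtain ⟨M6, hM6pos, hM6⟩ := support_bound hplus hhpsupp
  set M : ℝ := M1 + M2 + M3 + M4 + M5 + M6 with hM
  refine ⟨4 * M + 8 * T + 1, by positivity, fun t1 z1 t2 z2 _ ht1 ht2 hR => ?_⟩
  -- basic triangle inequality facts
  have e1 : |z1| - |t1| ≤ |z1 - t1| := abs_sub_abs_le_abs_sub z1 t1
  have e2 : |z2| - |t2| ≤ |z2 - t2| := abs_sub_abs_le_abs_sub z2 t2
  have e3 : |z1| - |t1| ≤ |z1 + t1| := low z1 t1
  have e4 : |z2| - |t2| ≤ |z2 + t2| := low z2 t2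
  refine ⟨?_, ?_, ?_, ?_⟩
  · rw [hψ1]
    exact hM1 _ _ (by linarith)
  · rw [hψ2]
    split_ifs with h
    · exact hM2 _ _ (by linarith)
    · -- boundary data hminus
      have ha : |z2 - z1| - |t1 + t2| ≤ |(-z1 + z2 + t1 + t2)| := by
        have := low (z2 - z1) (t1 + t2)
        have heq : z2 - z1 + (t1 + t2) = -z1 + z2 + t1 + t2 := by ring
        rwa [heq] at this
      have hb : |z1 + z2| - |t2 - t1| ≤ |(z1 + z2 - t1 + t2)| := by
        have := low (z1 + z2) (t2 - t1)
        have heq : z1 + z2 + (t2 - t1) = z1 + z2 - t1 + t2 := by ring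
        rwa [heq] at this
      have hda : |(-z1 + z2 + t1 + t2) / 2| = |(-z1 + z2 + t1 + t2)| / 2 := by
        rw [abs_div, abs_two]
      have hdb : |(z1 + z2 - t1 + t2) / 2| = |(z1 + z2 - t1 + t2)| / 2 := by
        rw [abs_div, abs_two]
      have tr1 : |2 * z1| ≤ |z1 + z2| + |z2 - z1| := by
        have := abs_add_le (z1 + z2) (z1 - z2)
        have heq : z1 + z2 + (z1 - z2) = 2 * z1 := by ring
        rw [heq] at this
        rw [abs_sub_comm z1 z2] at this
        linarith
      have tr2 : |2 * z2| ≤ |z1 + z2| + |z2 - z1| := by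
        have := abs_add_le (z1 + z2) (z2 - z1)
        have heq : z1 + z2 + (z2 - z1) = 2 * z2 := by ring
        rw [heq] at this
        linarith
      have hz1 : |2 * z1| = 2 * |z1| := by rw [abs_mul, abs_two]
      have hz2 : |2 * z2| = 2 * |z2| := by rw [abs_mul, abs_two]
      have htt1 : |t1 + t2| ≤ |t1| + |t2| := abs_add_le t1 t2
      have htt2 : |t2 - t1| ≤ |t2| + |t1| := abs_sub t2 t1
      exact hM5 _ _ (by rw [hda, hdb]; linarith)
  · rw [hψ3]
    split_ifs with h
    · exact hM3 _ _ (by linarith)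
    · -- boundary data hplus
      have ha : |z1 - z2| - |t1 + t2| ≤ |(z1 - z2 + t1 + t2)| := by
        have := low (z1 - z2) (t1 + t2)
        have heq : z1 - z2 + (t1 + t2) = z1 - z2 + t1 + t2 := by ring
        rwa [heq] at this
      have hb : |z1 + z2| - |t1 - t2| ≤ |(z1 + z2 + t1 - t2)| := by
        have := low (z1 + z2) (t1 - t2)
        have heq : z1 + z2 + (t1 - t2) = z1 + z2 + t1 - t2 := by ring
        rwa [heq] at this
      have hda : |(z1 - z2 + t1 + t2) / 2| = |(z1 - z2 + t1 + t2)| / 2 := by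
        rw [abs_div, abs_two]
      have hdb : |(z1 + z2 + t1 - t2) / 2| = |(z1 + z2 + t1 - t2)| / 2 := by
        rw [abs_div, abs_two]
      have tr1 : |2 * z1| ≤ |z1 + z2| + |z1 - z2| := by
        have := abs_add_le (z1 + z2) (z1 - z2)
        have heq : z1 + z2 + (z1 - z2) = 2 * z1 := by ring
        rw [heq] at this
        linarith
      have tr2 : |2 * z2| ≤ |z1 + z2| + |z1 - z2| := by
        have := abs_add_le (z1 + z2) (z2 - z1)
        have heq : z1 + z2 + (z2 - z1) = 2 * z2 := by ring
        rw [heq] at this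
        rw [abs_sub_comm z2 z1] at this
        linarith
      have hz1 : |2 * z1| = 2 * |z1| := by rw [abs_mul, abs_two]
      have hz2 : |2 * z2| = 2 * |z2| := by rw [abs_mul, abs_two]
      have htt1 : |t1 + t2| ≤ |t1| + |t2| := abs_add_le t1 t2
      have htt2 : |t1 - t2| ≤ |t1| + |t2| := abs_sub t1 t2
      exact hM6 _ _ (by rw [hda, hdb]; linarith)
  · rw [hψ4]
    exact hM4 _ _ (by linarith)
end
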